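/- Let U be a Δ-regular Lucas sequence and suppose there is a prime p > l with p ∤ Q whose rank of appearance in U equals l. Then for every j ≥ 0, the l-Lucasnomial Catalan number C_{U,l}(n) with n = l·p^j − 1 is not an integer. -/

import Mathlib

/-- The Lucas sequence `U(P,Q)`: `U_0 = 0`, `U_1 = 1`, `U_{n+2} = P·U_{n+1} − Q·U_n`. -/
def lucasU (P Q : ℤ) : ℕ → ℤ
  | 0 => 0
  | 1 => 1
  | n + 2 => P * lucasU P Q (n + 1) - Q * lucasU P Q n

/-- The generalized factorial `n!_U = U_n U_{n−1} ⋯ U_1`. -/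
def lucasFact (P Q : ℤ) (n : ℕ) : ℤ := ∏ i ∈ Finset.range n, lucasU P Q (i + 1)

lemma lucasU_zero (a b : ℤ) : lucasU a b 0 = 0 := rfl
lemma lucasU_one (a b : ℤ) : lucasU a b 1 = 1 := rfl
lemma lucasU_two (a b : ℤ) : lucasU a b 2 = a := by
  show a * lucasU a b 1 - b * lucasU a b 0 = a
  simp [lucasU_one, lucasU_zero]
lemma lucasU_rec (a b : ℤ) (n : ℕ) :
    lucasU a b (n + 2) = a * lucasU a b (n + 1) - b * lucasU a b n := rfl

/-- Addition formula. -/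
lemma lucasU_add (a b : ℤ) (m n : ℕ) :
    lucasU a b (m + n + 1) =
      lucasU a b (m + 1) * lucasU a b (n + 1) - b * lucasU a b m * lucasU a b n := by
  induction m using Nat.twoStepInduction with
  | zero => simp [lucasU_zero, lucasU_one]
  | one =>
    rw [show 1 + n + 1 = n + 2 from by omega, lucasU_rec,
      show (1:ℕ) + 1 = 2 from rfl, lucasU_two, lucasU_one]
    ring
  | more m ih1 ih2 =>
    rw [show m + 2 + n + 1 = (m + n + 1) + 2 from by omega, lucasU_rec,
      show m + n + 1 + 1 = m + 1 + n + 1 from by omega, ih2, ih1,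
      show m + 2 + 1 = m + 1 + 2 from by omega, lucasU_rec a b (m + 1),
      show m + 1 + 1 = m + 2 from rfl, lucasU_rec a b m]
    ring

/-- The norm identity `U_{n+1}² − a U_{n+1} U_n + b U_n² = bⁿ`. -/
lemma lucasU_sq (a b : ℤ) (n : ℕ) :
    lucasU a b (n + 1) ^ 2 - a * lucasU a b (n + 1) * lucasU a b n
      + b * lucasU a b n ^ 2 = b ^ n := by
  induction n with
  | zero => simp [lucasU_zero, lucasU_one]
  | succ n ih =>
    rw [lucasU_rec, show (b:ℤ) ^ (n + 1) = b ^ n * b from pow_succ b n, ← ih]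
    ring

/-- The companion sequence `V_n = 2 U_{n+1} − a U_n`. -/
def lucasV (a b : ℤ) (n : ℕ) : ℤ := 2 * lucasU a b (n + 1) - a * lucasU a b n

lemma lucasV_sq (a b : ℤ) (n : ℕ) :
    lucasV a b n ^ 2 - (a ^ 2 - 4 * b) * lucasU a b n ^ 2 = 4 * b ^ n := by
  have h := lucasU_sq a b n
  unfold lucasV
  linear_combination 4 * h

/-- `U_{m+2n} = V_n U_{m+n} − bⁿ U_m`. -/
lemma lucasU_shift (a b : ℤ) (n m : ℕ) :
    lucasU a b (m + 2 * n) = lucasV a b n * lucasU a b (m + n) - b ^ n * lucasU a b m := by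
  induction m using Nat.twoStepInduction with
  | zero =>
    -- U_{2n} = V_n U_n
    rcases n with _ | n
    · simp [lucasU_zero, lucasV]
    · have hA := lucasU_add a b (n + 1) n
      rw [show 0 + 2 * (n + 1) = (n + 1) + n + 1 from by omega, hA,
        show 0 + (n + 1) = n + 1 from by omega, lucasU_zero, lucasV]
      have hrec : lucasU a b (n + 2) = a * lucasU a b (n + 1) - b * lucasU a b n :=
        lucasU_rec a b n
      rw [show n + 1 + 1 = n + 2 from rfl, hrec]
      ring
  | one =>
    -- U_{2n+1} = V_n U_{n+1} − bⁿ
    rcases n with _ | n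
    · simp [lucasU_one, lucasV, lucasU_zero]
    · have hA := lucasU_add a b (n + 1) (n + 1)
      have hsq := lucasU_sq a b (n + 1)
      rw [show 1 + 2 * (n + 1) = (n + 1) + (n + 1) + 1 from by omega, hA,
        show 1 + (n + 1) = n + 1 + 1 from by omega, lucasU_one, lucasV]
      linear_combination -hsq
  | more m ih1 ih2 =>
    rw [show m + 2 + 2 * n = (m + 2 * n) + 2 from by omega, lucasU_rec,
      show m + 2 * n + 1 = m + 1 + 2 * n from by omega, ih2, ih1,
      show m + 2 + n = (m + n) + 2 from by omega, lucasU_rec a b (m + n),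
      show m + 1 + n = m + n + 1 from by omega, lucasU_rec a b m]
    ring

/-- Multiplication: `U_{kn} = U_n · Ũ_k` where `Ũ = U(V_n, bⁿ)`. -/
lemma lucasU_mul (a b : ℤ) (n k : ℕ) :
    lucasU a b (k * n) = lucasU a b n * lucasU (lucasV a b n) (b ^ n) k := by
  induction k using Nat.twoStepInduction with
  | zero => simp [lucasU_zero]
  | one => simp [lucasU_one, one_mul]
  | more k ih1 ih2 =>
    rw [show (k + 2) * n = k * n + 2 * n from by ring, lucasU_shift,
      show k * n + n = (k + 1) * n from by ring, ih2, ih1, lucasU_rec]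
    ring

/-- `2^{n+1} U_{n+1} ≡ 2 (n+1) aⁿ  (mod a² − 4b)`. -/
lemma lucasU_cong (a b : ℤ) (n : ℕ) :
    ∃ t : ℤ, 2 ^ (n + 1) * lucasU a b (n + 1)
      = 2 * (n + 1) * a ^ n + (a ^ 2 - 4 * b) * t := by
  induction n using Nat.twoStepInduction with
  | zero => exact ⟨0, by simp [lucasU_one]⟩
  | one => exact ⟨0, by rw [lucasU_two]; push_cast; ring⟩
  | more n ih1 ih2 =>
    obtain ⟨t1, h1⟩ := ih1
    obtain ⟨t2, h2⟩ := ih2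
    refine ⟨2 * ((n : ℤ) + 1) * a ^ n + 2 * a * t2 - 4 * b * t1, ?_⟩
    rw [lucasU_rec]
    push_cast
    push_cast at h1 h2
    linear_combination 2 * a * h2 - 4 * b * h1

section Rank

variable {P Q : ℤ} {p l : ℕ}

lemma lucasU_not_consec (hp : p.Prime) (hpQ : ¬(p : ℤ) ∣ Q) :
    ∀ m : ℕ, (p : ℤ) ∣ lucasU P Q m → (p : ℤ) ∣ lucasU P Q (m + 1) → False := by
  intro m
  induction m with
  | zero =>
    intro _ h1
    rw [lucasU_one] at h1
    have : (p : ℤ) = 1 := Int.eq_one_of_dvd_one (by positivity) h1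
    have : p = 1 := by exact_mod_cast this
    have := hp.one_lt
    omega
  | succ m ih =>
    intro h1 h2
    have hrec := lucasU_rec P Q m
    have hQU : (p : ℤ) ∣ Q * lucasU P Q m := by
      have : Q * lucasU P Q m = P * lucasU P Q (m + 1) - lucasU P Q (m + 2) := by
        rw [hrec]; ring
      rw [this]
      exact dvd_sub (Dvd.dvd.mul_left h1 P) h2
    rcases (Nat.prime_iff_prime_int.1 hp).dvd_mul.mp hQU with h | h
    · exact hpQ h
    · exact ih h h1

lemma rank_dvd_iff (hp : p.Prime) (hpQ : ¬(p : ℤ) ∣ Q) (hl : 1 ≤ l)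
    (hrank : (p : ℤ) ∣ lucasU P Q l)
    (hrankmin : ∀ m : ℕ, 0 < m → m < l → ¬ (p : ℤ) ∣ lucasU P Q m) :
    ∀ m : ℕ, (p : ℤ) ∣ lucasU P Q m ↔ l ∣ m := by
  have hmul : ∀ k : ℕ, (p : ℤ) ∣ lucasU P Q (k * l) := by
    intro k
    exact hrank.trans ⟨_, lucasU_mul P Q l k⟩
  intro m
  constructor
  · intro h
    by_contra hlm
    set r := m % l with hr
    have hr0 : 0 < r := Nat.pos_of_ne_zero fun h0 => hlm (Nat.dvd_of_mod_eq_zero h0)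
    have hrl : r < l := Nat.mod_lt _ (by omega)
    have hm : m = l * (m / l) + r := (Nat.div_add_mod m l).symm
    -- U_m = U_{l(m/l)+1} U_r − Q U_{l(m/l)} U_{r−1}
    have hA := lucasU_add P Q (l * (m / l)) (r - 1)
    rw [show l * (m / l) + (r - 1) + 1 = m from by omega,
      show r - 1 + 1 = r from by omega] at hA
    have hdvd1 : (p : ℤ) ∣ lucasU P Q (l * (m / l)) := by
      rw [mul_comm]; exact hmul _
    have hUr : (p : ℤ) ∣ lucasU P Q (l * (m / l) + 1) * lucasU P Q r := by
      have : lucasU P Q (l * (m / l) + 1) * lucasU P Q r =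
          lucasU P Q m + Q * lucasU P Q (l * (m / l)) * lucasU P Q (r - 1) := by
        rw [hA]; ring
      rw [this]
      exact dvd_add h (((hdvd1.mul_left Q).mul_right _))
    rcases (Nat.prime_iff_prime_int.1 hp).dvd_mul.mp hUr with h' | h'
    · exact lucasU_not_consec hp hpQ _ hdvd1 h'
    · exact hrankmin r hr0 hrl h'
  · rintro ⟨k, rfl⟩
    rw [mul_comm]
    exact hmul k

lemma lucasV_not_dvd (hp : p.Prime) (hp3 : 3 ≤ p) (hpQ : ¬(p : ℤ) ∣ Q)
    {n : ℕ} (hU : (p : ℤ) ∣ lucasU P Q n) : ¬ (p : ℤ) ∣ lucasV P Q n := by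
  intro hV
  have hsq := lucasV_sq P Q n
  have h4 : (p : ℤ) ∣ 4 * Q ^ n := by
    have : (4 : ℤ) * Q ^ n = lucasV P Q n * lucasV P Q n
        - (P ^ 2 - 4 * Q) * lucasU P Q n * lucasU P Q n := by
      rw [← hsq]; ring
    rw [this]
    exact dvd_sub (hV.mul_left _) ((hU.mul_left _).mul_right _)
  have hpZ := Nat.prime_iff_prime_int.1 hp
  rcases hpZ.dvd_mul.mp h4 with h | h
  · have h2 : p ∣ 4 := by exact_mod_cast h
    rw [show (4 : ℕ) = 2 ^ 2 from rfl] at h2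
    have h2' := Nat.le_of_dvd (by norm_num) (hp.dvd_of_dvd_pow h2)
    omega
  · exact hpQ (hpZ.dvd_of_dvd_pow h)

/-- Core LTE step: if `p ∤ a` and `p² ∣ a² − 4b` then `U(a,b)_p = p·u` with `p ∤ u`. -/
lemma lucasU_core (a b : ℤ) (hp : p.Prime) (hp3 : 3 ≤ p) (ha : ¬(p : ℤ) ∣ a)
    (hD : (p : ℤ) ^ 2 ∣ a ^ 2 - 4 * b) :
    ∃ u : ℤ, lucasU a b p = (p : ℤ) * u ∧ ¬ (p : ℤ) ∣ u := by
  have hpZ := Nat.prime_iff_prime_int.1 hp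
  obtain ⟨t, ht⟩ := lucasU_cong a b (p - 1)
  obtain ⟨d, hd⟩ := hD
  rw [show p - 1 + 1 = p from by omega] at ht
  have hcast : ((p - 1 : ℕ) : ℤ) + 1 = (p : ℤ) := by
    have : (1 : ℕ) ≤ p := by omega
    push_cast [this]; ring
  rw [hcast, hd] at ht
  -- 2^p U_p = 2 p a^{p-1} + p² d t
  have hdvdU : (p : ℤ) ∣ lucasU a b p := by
    have h1 : (p : ℤ) ∣ 2 ^ p * lucasU a b p := by
      rw [ht]
      exact dvd_add ⟨2 * a ^ (p - 1), by ring⟩ ⟨(p : ℤ) * d * t, by ring⟩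
    rcases hpZ.dvd_mul.mp h1 with h | h
    · exact absurd (hpZ.dvd_of_dvd_pow h) (by
        intro h2
        have : p ∣ 2 := by exact_mod_cast h2
        have := Nat.le_of_dvd (by norm_num) this
        omega)
    · exact h
  obtain ⟨u, hu⟩ := hdvdU
  refine ⟨u, hu, fun hpu => ?_⟩
  rw [hu] at ht
  have hp0 : (p : ℤ) ≠ 0 := by exact_mod_cast hp.ne_zero
  have ht' : 2 ^ p * u = 2 * a ^ (p - 1) + (p : ℤ) * (d * t) := by
    apply mul_left_cancel₀ hp0
    linear_combination ht
  have h2a : (p : ℤ) ∣ 2 * a ^ (p - 1) := by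
    have : (2 : ℤ) * a ^ (p - 1) = 2 ^ p * u - (p : ℤ) * (d * t) := by rw [ht']; ring
    rw [this]
    exact dvd_sub (hpu.mul_left _) (dvd_mul_right _ _)
  rcases hpZ.dvd_mul.mp h2a with h | h
  · have : p ∣ 2 := by exact_mod_cast h
    have := Nat.le_of_dvd (by norm_num) this
    omega
  · exact ha (hpZ.dvd_of_dvd_pow h)

end Rank

section Val

variable {P Q : ℤ} {p l : ℕ} [hpf : Fact p.Prime]

lemma lucasFact_succ (P Q : ℤ) (m : ℕ) :
    lucasFact P Q (m + 1) = lucasFact P Q m * lucasU P Q (m + 1) :=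
  Finset.prod_range_succ _ _

lemma lucasFact_ne_zero {P Q : ℤ} (hreg : ∀ n : ℕ, 1 ≤ n → lucasU P Q n ≠ 0) (m : ℕ) :
    lucasFact P Q m ≠ 0 :=
  Finset.prod_ne_zero_iff.mpr fun i _ => hreg (i + 1) (by omega)

lemma val_mul_rank (hp3 : 3 ≤ p) (hpQ : ¬(p : ℤ) ∣ Q) (hl : 1 ≤ l)
    (hreg : ∀ n : ℕ, 1 ≤ n → lucasU P Q n ≠ 0)
    (hrank : (p : ℤ) ∣ lucasU P Q l)
    (hrankmin : ∀ m : ℕ, 0 < m → m < l → ¬ (p : ℤ) ∣ lucasU P Q m) :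
    ∀ k : ℕ, 1 ≤ k →
      padicValInt p (lucasU P Q (k * l)) =
        padicValInt p (lucasU P Q l) + padicValNat p k := by
  have hp := hpf.out
  have hpZ := Nat.prime_iff_prime_int.1 hp
  have hdvd := rank_dvd_iff hp hpQ hl hrank hrankmin
  intro k
  induction k using Nat.strong_induction_on with
  | _ k ih =>
  intro hk1
  by_cases hpk : p ∣ k
  · obtain ⟨m, rfl⟩ := hpk
    have hm1 : 1 ≤ m := Nat.pos_of_ne_zero (by rintro rfl; simp at hk1)
    have hmul := lucasU_mul P Q (m * l) p
    have hUml : (p : ℤ) ∣ lucasU P Q (m * l) := (hdvd _).mpr ⟨m, mul_comm m l⟩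
    obtain ⟨w, hw⟩ := hUml
    have hUml' : (p : ℤ) ∣ lucasU P Q (m * l) := ⟨w, hw⟩
    have hVml : ¬ (p : ℤ) ∣ lucasV P Q (m * l) := lucasV_not_dvd hp hp3 hpQ hUml'
    have hD : (p : ℤ) ^ 2 ∣ lucasV P Q (m * l) ^ 2 - 4 * Q ^ (m * l) := by
      have h1 : lucasV P Q (m * l) ^ 2 - 4 * Q ^ (m * l)
          = (P ^ 2 - 4 * Q) * lucasU P Q (m * l) ^ 2 := by
        linear_combination lucasV_sq P Q (m * l)
      rw [h1, hw]
      exact ⟨(P ^ 2 - 4 * Q) * w ^ 2, by ring⟩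
    obtain ⟨u, hu, hnu⟩ := lucasU_core _ _ hp hp3 hVml hD
    rw [show p * m * l = p * (m * l) from by ring, hmul, hu]
    have hUml0 : lucasU P Q (m * l) ≠ 0 := hreg _ (Nat.mul_pos hm1 hl)
    have hne : lucasU P Q (m * l) * ((p : ℤ) * u) ≠ 0 := by
      rw [← hu, ← hmul]
      exact hreg _ (Nat.mul_pos hp.pos (Nat.mul_pos hm1 hl))
    have hu0 : u ≠ 0 := by rintro rfl; simp at hne
    have hp0 : ((p : ℕ) : ℤ) ≠ 0 := by exact_mod_cast hp.ne_zero
    rw [padicValInt.mul hUml0 (mul_ne_zero hp0 hu0),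
      padicValInt.mul hp0 hu0, padicValInt.self hp.one_lt,
      padicValInt.eq_zero_of_not_dvd hnu,
      ih m (lt_mul_of_one_lt_left hm1 hp.one_lt) hm1,
      padicValNat.mul hp.ne_zero (by omega),
      padicValNat.self hp.one_lt]
    omega
  · have hmul := lucasU_mul P Q l k
    have hUk0 : lucasU P Q (k * l) ≠ 0 := hreg _ (Nat.mul_pos hk1 hl)
    have hU'0 : lucasU (lucasV P Q l) (Q ^ l) k ≠ 0 := fun h =>
      hUk0 (by rw [hmul, h, mul_zero])
    have hVl : ¬ (p : ℤ) ∣ lucasV P Q l := lucasV_not_dvd hp hp3 hpQ hrank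
    have hnd : ¬ (p : ℤ) ∣ lucasU (lucasV P Q l) (Q ^ l) k := by
      intro hdvdk
      obtain ⟨t, ht⟩ := lucasU_cong (lucasV P Q l) (Q ^ l) (k - 1)
      rw [show k - 1 + 1 = k from by omega] at ht
      have hD' : (p : ℤ) ∣ lucasV P Q l ^ 2 - 4 * Q ^ l := by
        have h1 : lucasV P Q l ^ 2 - 4 * Q ^ l = (P ^ 2 - 4 * Q) * lucasU P Q l ^ 2 := by
          linear_combination lucasV_sq P Q l
        rw [h1]
        exact ((dvd_pow hrank two_ne_zero).mul_left _)
      have h2k : (p : ℤ) ∣ 2 * (((k - 1 : ℕ) : ℤ) + 1) * lucasV P Q l ^ (k - 1) := by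
        have he : (2 : ℤ) * (((k - 1 : ℕ) : ℤ) + 1) * lucasV P Q l ^ (k - 1)
            = 2 ^ k * lucasU (lucasV P Q l) (Q ^ l) k
              - (lucasV P Q l ^ 2 - 4 * Q ^ l) * t := by
          rw [ht]; ring
        rw [he]
        exact dvd_sub (hdvdk.mul_left _) (hD'.mul_right _)
      have hkZ : ((k - 1 : ℕ) : ℤ) + 1 = (k : ℤ) := by
        have : (1 : ℕ) ≤ k := hk1
        push_cast [this]; ring
      rw [hkZ] at h2k
      rcases hpZ.dvd_mul.mp h2k with h | h
      · rcases hpZ.dvd_mul.mp h with h' | h'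
        · have : p ∣ 2 := by exact_mod_cast h'
          have := Nat.le_of_dvd (by norm_num) this
          omega
        · exact hpk (by exact_mod_cast h')
      · exact hVl (hpZ.dvd_of_dvd_pow h)
    rw [hmul, padicValInt.mul (hreg l hl) hU'0, padicValInt.eq_zero_of_not_dvd hnd,
      padicValNat.eq_zero_of_not_dvd hpk]

lemma val_fact (hp3 : 3 ≤ p) (hpQ : ¬(p : ℤ) ∣ Q) (hl : 1 ≤ l)
    (hreg : ∀ n : ℕ, 1 ≤ n → lucasU P Q n ≠ 0)
    (hrank : (p : ℤ) ∣ lucasU P Q l)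
    (hrankmin : ∀ m : ℕ, 0 < m → m < l → ¬ (p : ℤ) ∣ lucasU P Q m) :
    ∀ m : ℕ, padicValInt p (lucasFact P Q m) =
      (m / l) * padicValInt p (lucasU P Q l) + padicValNat p (Nat.factorial (m / l)) := by
  have hp := hpf.out
  have hdvd := rank_dvd_iff hp hpQ hl hrank hrankmin
  intro m
  induction m with
  | zero => simp [lucasFact, Nat.factorial]
  | succ m ih =>
    rw [lucasFact_succ, padicValInt.mul (lucasFact_ne_zero hreg m) (hreg _ (by omega)), ih]
    by_cases hldvd : l ∣ m + 1
    · have hq1 : 1 ≤ (m + 1) / l := Nat.div_pos (Nat.le_of_dvd (by omega) hldvd) (by omega)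
      have hUval : padicValInt p (lucasU P Q (m + 1)) =
          padicValInt p (lucasU P Q l) + padicValNat p ((m + 1) / l) := by
        conv_lhs => rw [show m + 1 = ((m + 1) / l) * l from (Nat.div_mul_cancel hldvd).symm]
        exact val_mul_rank hp3 hpQ hl hreg hrank hrankmin _ hq1
      have hsd : (m + 1) / l = m / l + 1 := by
        rw [Nat.succ_div, if_pos hldvd]
      rw [hUval, hsd, Nat.factorial_succ,
        padicValNat.mul (by omega) (Nat.factorial_ne_zero _)]
      ring
    · have hU0 : padicValInt p (lucasU P Q (m + 1)) = 0 :=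
        padicValInt.eq_zero_of_not_dvd (fun h => hldvd ((hdvd _).mp h))
      have hsd : (m + 1) / l = m / l := by
        rw [Nat.succ_div, if_neg hldvd]; omega
      rw [hU0, hsd]; omega

end Val

section Legendre

variable {p : ℕ} [hpf : Fact p.Prime]

lemma padicValInt_pow' (k : ℕ) {x : ℤ} (hx : x ≠ 0) :
    padicValInt p (x ^ k) = k * padicValInt p x := by
  unfold padicValInt
  rw [Int.natAbs_pow, padicValNat.pow _ k]

lemma legendre_key {l : ℕ} (hp3 : 3 ≤ p) (hl2 : 2 ≤ l) (hlp : l + 1 ≤ p) (j : ℕ) :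
    padicValNat p (Nat.factorial ((l + 1) * p ^ j - 2)) =
      (l + 1) * padicValNat p (Nat.factorial (p ^ j - 1)) + l * j := by
  have hp := hpf.out
  have hpj : 1 ≤ p ^ j := Nat.one_le_pow _ _ hp.pos
  have hN2pos : 1 ≤ (l + 1) * p ^ j - 2 := by
    have : 3 * p ^ j ≤ (l + 1) * p ^ j := Nat.mul_le_mul_right _ (by omega)
    have h3 : 3 * 1 ≤ 3 * p ^ j := Nat.mul_le_mul_left _ hpj
    omega
  have hlog1 : Nat.log p (p ^ j - 1) < j + 1 := by
    have h1 : Nat.log p (p ^ j - 1) ≤ Nat.log p (p ^ j) :=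
      Nat.log_mono_right (Nat.sub_le _ _)
    rw [Nat.log_pow hp.one_lt] at h1
    omega
  have hN2lt : (l + 1) * p ^ j - 2 < p ^ (j + 1) := by
    have h1 : (l + 1) * p ^ j ≤ p * p ^ j := Nat.mul_le_mul_right _ hlp
    have h2 : p * p ^ j = p ^ (j + 1) := by rw [pow_succ]; ring
    omega
  have hlog2 : Nat.log p ((l + 1) * p ^ j - 2) < j + 1 :=
    Nat.log_lt_of_lt_pow (by omega) hN2lt
  rw [padicValNat_factorial hlog1, padicValNat_factorial hlog2]
  have hterm : ∀ i ∈ Finset.Ico 1 (j + 1),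
      ((l + 1) * p ^ j - 2) / p ^ i = (l + 1) * ((p ^ j - 1) / p ^ i) + l := by
    intro i hi
    rw [Finset.mem_Ico] at hi
    have hpow : p ^ (j - i) * p ^ i = p ^ j := by
      rw [← pow_add]; congr 1; omega
    have hpi1 : 1 ≤ p ^ i := Nat.one_le_pow _ _ hp.pos
    have hpi2 : 2 ≤ p ^ i := by
      calc 2 ≤ p := by omega
        _ = p ^ 1 := (pow_one p).symm
        _ ≤ p ^ i := Nat.pow_le_pow_right hp.pos hi.1
    have hpji : 1 ≤ p ^ (j - i) := Nat.one_le_pow _ _ hp.pos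
    have hlpji : 1 ≤ (l + 1) * p ^ (j - i) := Nat.mul_pos (by omega) hpji
    have hd1 : (p ^ j - 1) / p ^ i = p ^ (j - i) - 1 := by
      apply Nat.div_eq_of_lt_le
      · rw [Nat.sub_mul, one_mul, hpow]
        exact Nat.sub_le_sub_left hpi1 _
      · rw [Nat.sub_add_cancel hpji, hpow]
        exact Nat.sub_lt (by omega) one_pos
    have hd2 : ((l + 1) * p ^ j - 2) / p ^ i = (l + 1) * p ^ (j - i) - 1 := by
      apply Nat.div_eq_of_lt_le
      · rw [Nat.sub_mul, one_mul, mul_assoc, hpow]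
        exact Nat.sub_le_sub_left hpi2 _
      · rw [Nat.sub_add_cancel hlpji, mul_assoc, hpow]
        exact Nat.sub_lt (by omega) two_pos
    rw [hd1, hd2]
    zify [hpji, hlpji]
    ring
  rw [Finset.sum_congr rfl hterm, Finset.sum_add_distrib, ← Finset.mul_sum,
    Finset.sum_const, Nat.card_Ico, smul_eq_mul, Nat.add_sub_cancel]
  ring

end Legendre

set_option maxHeartbeats 1000000 in
/-- If there is a prime `p > l`, `p ∤ Q`, of rank `l` in the Δ-regular Lucas sequence `U`,
then for every `j ≥ 0`, the `l`-Lucasnomial Catalan number `C_{U,l}(n)` with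
`n = l·p^j − 1` is not an integer. -/
theorem stmt16 (P Q : ℤ) (l : ℕ) (hl : 1 ≤ l) (hP : P ≠ 0) (hQ : Q ≠ 0)
    (hcop : IsCoprime P Q) (hreg : ∀ n : ℕ, 1 ≤ n → lucasU P Q n ≠ 0)
    (hΔ : P ^ 2 - 4 * Q ≠ 0) (p : ℕ) (hp : p.Prime) (hpl : l < p)
    (hpQ : ¬ (p : ℤ) ∣ Q) (hrank : (p : ℤ) ∣ lucasU P Q l)
    (hrankmin : ∀ m : ℕ, 0 < m → m < l → ¬ (p : ℤ) ∣ lucasU P Q m) :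
    ∀ j : ℕ,
      ¬ (lucasU P Q (l * p ^ j - 1 + 1) ^ l * (lucasFact P Q (l * p ^ j - 1)) ^ (l + 1) ∣
          lucasFact P Q ((l + 1) * (l * p ^ j - 1))) := by
  intro j hdvdBA
  -- the case l = 1 is impossible: p would divide U₁ = 1
  rcases Nat.lt_or_ge l 2 with hl1 | hl2
  · have hl1' : l = 1 := by omega
    subst hl1'
    rw [lucasU_one] at hrank
    have h1 : (p : ℤ) = 1 := Int.eq_one_of_dvd_one (by positivity) hrank
    have : p = 1 := by exact_mod_cast h1
    exact absurd this (by have := hp.one_lt; omega)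
  have hp3 : 3 ≤ p := by
    rcases Nat.lt_or_ge p 3 with h | h
    · interval_cases p <;> omega
    · exact h
  haveI : Fact p.Prime := ⟨hp⟩
  set n := l * p ^ j - 1 with hn
  set c := padicValInt p (lucasU P Q l) with hc
  have hpj : 1 ≤ p ^ j := Nat.one_le_pow _ _ hp.pos
  have hlpj : 1 ≤ l * p ^ j := Nat.mul_pos (by omega) hpj
  have hn1 : n + 1 = l * p ^ j := Nat.sub_add_cancel hlpj
  have hc1 : 1 ≤ c := by
    rcases (padicValInt_dvd_iff 1 (lucasU P Q l)).mp (by simpa using hrank) with h | h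
    · exact absurd h (hreg l (by omega))
    · exact h
  -- n / l = p^j − 1
  have hdivn : n / l = p ^ j - 1 := by
    apply Nat.div_eq_of_lt_le
    · rw [Nat.sub_mul, one_mul, mul_comm]
      exact Nat.sub_le_sub_left (by omega) _
    · rw [Nat.sub_add_cancel hpj, mul_comm]
      exact Nat.sub_lt hlpj one_pos
  -- ((l+1) n) / l = (l+1) p^j − 2
  have hdivN2 : ((l + 1) * n) / l = (l + 1) * p ^ j - 2 := by
    apply Nat.div_eq_of_lt_le
    · rw [hn]
      zify [hlpj, show 2 ≤ (l + 1) * p ^ j from by nlinarith]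
      nlinarith
    · rw [hn]
      zify [hlpj, show 2 ≤ (l + 1) * p ^ j from by nlinarith]
      nlinarith
  -- valuation of the numerator-side product
  have hFactn0 : lucasFact P Q n ≠ 0 := lucasFact_ne_zero hreg n
  have hUn1 : lucasU P Q (n + 1) ≠ 0 := hreg _ (by omega)
  have hvalU : padicValInt p (lucasU P Q (n + 1)) = c + j := by
    rw [show n + 1 = p ^ j * l from by rw [hn1, mul_comm],
      val_mul_rank hp3 hpQ hl hreg hrank hrankmin _ hpj, padicValNat.prime_pow]
  have hvalFn : padicValInt p (lucasFact P Q n) =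
      (p ^ j - 1) * c + padicValNat p (Nat.factorial (p ^ j - 1)) := by
    rw [val_fact hp3 hpQ hl hreg hrank hrankmin n, hdivn]
  have hvalFB : padicValInt p (lucasFact P Q ((l + 1) * n)) =
      ((l + 1) * p ^ j - 2) * c +
        ((l + 1) * padicValNat p (Nat.factorial (p ^ j - 1)) + l * j) := by
    rw [val_fact hp3 hpQ hl hreg hrank hrankmin _, hdivN2,
      legendre_key hp3 hl2 (by omega) j]
  have hvalA : padicValInt p
      (lucasU P Q (n + 1) ^ l * lucasFact P Q n ^ (l + 1)) =
      l * (c + j) + (l + 1) * ((p ^ j - 1) * c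
        + padicValNat p (Nat.factorial (p ^ j - 1))) := by
    rw [padicValInt.mul (pow_ne_zero _ hUn1) (pow_ne_zero _ hFactn0),
      padicValInt_pow' l hUn1, padicValInt_pow' (l + 1) hFactn0, hvalU, hvalFn]
  -- the contradiction
  obtain ⟨t, ht⟩ := hdvdBA
  have hB0 : lucasFact P Q ((l + 1) * n) ≠ 0 := lucasFact_ne_zero hreg _
  have ht0 : t ≠ 0 := by rintro rfl; rw [mul_zero] at ht; exact hB0 ht
  have hA0 : lucasU P Q (n + 1) ^ l * lucasFact P Q n ^ (l + 1) ≠ 0 :=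
    mul_ne_zero (pow_ne_zero _ hUn1) (pow_ne_zero _ hFactn0)
  have hle : padicValInt p (lucasU P Q (n + 1) ^ l * lucasFact P Q n ^ (l + 1)) ≤
      padicValInt p (lucasFact P Q ((l + 1) * n)) := by
    rw [ht, padicValInt.mul hA0 ht0]
    omega
  rw [hvalA, hvalFB] at hle
  set S := padicValNat p (Nat.factorial (p ^ j - 1)) with hS
  zify [hpj, show 2 ≤ (l + 1) * p ^ j from by nlinarith] at hle
  nlinarith [hle, hc1]
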